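/- Let S be a band (a semigroup of idempotents). Then for a, b ∈ S, a ∼ b if and only if a D b. -/
import Mathlib


variable {S : Type*} [Semigroup S]

/-- Primary conjugacy: `a = x*y` and `b = y*x` for some `x, y`. -/
def PConj (a b : S) : Prop := ∃ x y : S, a = x * y ∧ b = y * x

/-- Conjugacy: the transitive closure of primary conjugacy. -/
def SConj : S → S → Prop := Relation.TransGen PConj

/-- `pw a n` is `a ^ n` for `n ≥ 1` (with junk value `a` at `n = 0`). -/
def pw (a : S) : ℕ → S
  | 0 => a
  | 1 => a
  | n + 2 => pw a (n + 1) * a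

/-- An element is a group element iff it lies in some subgroup of `S`:
there is an idempotent `e` acting as identity on `a`, and an inverse of `a`
relative to `e`. -/
def IsGroupElement (a : S) : Prop :=
  ∃ e b : S, e * e = e ∧ e * a = a ∧ a * e = a ∧ a * b = e ∧ b * a = e

/-- An element is group-bound if some positive power is a group element. -/
def GroupBound (a : S) : Prop := ∃ n : ℕ, 1 ≤ n ∧ IsGroupElement (pw a n)

/-- Green's L-relation: same principal left ideal in `S¹`. -/
def LRel (a b : S) : Prop :=
  (∃ u : WithOne S, u * (a : WithOne S) = (b : WithOne S)) ∧
  (∃ u : WithOne S, u * (b : WithOne S) = (a : WithOne S))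

/-- Green's R-relation: same principal right ideal in `S¹`. -/
def RRel (a b : S) : Prop :=
  (∃ u : WithOne S, (a : WithOne S) * u = (b : WithOne S)) ∧
  (∃ u : WithOne S, (b : WithOne S) * u = (a : WithOne S))

/-- Green's H-relation. -/
def HRel (a b : S) : Prop := LRel a b ∧ RRel a b

/-- Green's D-relation. -/
def DRel (a b : S) : Prop := ∃ c : S, LRel a c ∧ RRel c b

lemma withone_cases' (x : WithOne S) : x = 1 ∨ ∃ y : S, x = ↑y :=
  Option.casesOn x (Or.inl rfl) (fun y => Or.inr ⟨y, rfl⟩)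

lemma lrel_refl' (a : S) : LRel a a := ⟨⟨1, one_mul _⟩, ⟨1, one_mul _⟩⟩
lemma rrel_refl' (a : S) : RRel a a := ⟨⟨1, mul_one _⟩, ⟨1, mul_one _⟩⟩
lemma lrel_symm' {a b : S} (h : LRel a b) : LRel b a := ⟨h.2, h.1⟩
lemma rrel_symm' {a b : S} (h : RRel a b) : RRel b a := ⟨h.2, h.1⟩

lemma lrel_trans' {a b c : S} (h1 : LRel a b) (h2 : LRel b c) : LRel a c := by
  obtain ⟨⟨u, hu⟩, ⟨v, hv⟩⟩ := h1
  obtain ⟨⟨u', hu'⟩, ⟨v', hv'⟩⟩ := h2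
  exact ⟨⟨u' * u, by rw [mul_assoc, hu, hu']⟩, ⟨v * v', by rw [mul_assoc, hv', hv]⟩⟩

lemma rrel_trans' {a b c : S} (h1 : RRel a b) (h2 : RRel b c) : RRel a c := by
  obtain ⟨⟨u, hu⟩, ⟨v, hv⟩⟩ := h1
  obtain ⟨⟨u', hu'⟩, ⟨v', hv'⟩⟩ := h2
  exact ⟨⟨u * u', by rw [← mul_assoc, hu, hu']⟩, ⟨v' * v, by rw [← mul_assoc, hv', hv]⟩⟩

/-- `L ∘ R ⊆ R ∘ L` in any semigroup. -/
lemma lr_to_rl' {a b c : S} (hL : LRel a c) (hR : RRel c b) :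
    ∃ d : S, RRel a d ∧ LRel d b := by
  obtain ⟨⟨u, hu⟩, ⟨v, hv⟩⟩ := hL   -- u * a = c, v * c = a
  obtain ⟨⟨s, hs⟩, ⟨t, ht⟩⟩ := hR   -- c * s = b, b * t = c
  rcases withone_cases' s with rfl | ⟨s₀, rfl⟩
  · rw [mul_one] at hs
    have hbc : c = b := WithOne.coe_inj.mp hs
    subst hbc
    exact ⟨a, rrel_refl' a, ⟨⟨u, hu⟩, ⟨v, hv⟩⟩⟩
  · refine ⟨a * s₀, ⟨⟨(s₀ : WithOne S), by rw [WithOne.coe_mul]⟩,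
      ⟨t, ?_⟩⟩, ⟨⟨u, ?_⟩, ⟨v, ?_⟩⟩⟩
    · calc (↑(a * s₀) : WithOne S) * t = v * ↑c * ↑s₀ * t := by
            rw [WithOne.coe_mul, hv]
        _ = v * (↑c * ↑s₀) * t := by rw [mul_assoc v]
        _ = v * ↑b * t := by rw [hs]
        _ = v * (↑b * t) := by rw [mul_assoc]
        _ = v * ↑c := by rw [ht]
        _ = ↑a := hv
    · calc u * (↑(a * s₀) : WithOne S) = u * ↑a * ↑s₀ := by
            rw [WithOne.coe_mul, mul_assoc]
        _ = ↑c * ↑s₀ := by rw [hu]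
        _ = ↑b := hs
    · calc v * (↑b : WithOne S) = v * (↑c * ↑s₀) := by rw [hs]
        _ = v * ↑c * ↑s₀ := by rw [mul_assoc]
        _ = ↑a * ↑s₀ := by rw [hv]
        _ = ↑(a * s₀) := (WithOne.coe_mul a s₀).symm

/-- `R ∘ L ⊆ L ∘ R` in any semigroup. -/
lemma rl_to_lr' {a b c : S} (hR : RRel a c) (hL : LRel c b) :
    ∃ d : S, LRel a d ∧ RRel d b := by
  obtain ⟨d, h1, h2⟩ := lr_to_rl' (lrel_symm' hL) (rrel_symm' hR)
  exact ⟨d, lrel_symm' h2, rrel_symm' h1⟩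

lemma drel_trans' {a b c : S} (h1 : DRel a b) (h2 : DRel b c) : DRel a c := by
  obtain ⟨c1, hL1, hR1⟩ := h1
  obtain ⟨c2, hL2, hR2⟩ := h2
  obtain ⟨d, hLd, hRd⟩ := rl_to_lr' hR1 hL2
  exact ⟨d, lrel_trans' hL1 hLd, rrel_trans' hRd hR2⟩

lemma pconj_drel' (hband : ∀ x : S, x * x = x) {a b : S} (h : PConj a b) :
    DRel a b := by
  obtain ⟨x, y, rfl, rfl⟩ := h
  refine ⟨y * (x * y), ⟨⟨(y : WithOne S), ?_⟩, ⟨(x : WithOne S), ?_⟩⟩,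
    ⟨⟨(x : WithOne S), ?_⟩, ⟨(y : WithOne S), ?_⟩⟩⟩
  · rw [← WithOne.coe_mul]
  · rw [← WithOne.coe_mul, WithOne.coe_inj, ← mul_assoc, hband]
  · rw [← WithOne.coe_mul, WithOne.coe_inj]
    calc y * (x * y) * x = y * (x * (y * x)) := by rw [mul_assoc, mul_assoc]
      _ = (y * x) * (y * x) := by rw [← mul_assoc, ← mul_assoc]
      _ = y * x := hband _
  · rw [← WithOne.coe_mul, WithOne.coe_inj, mul_assoc]

lemma band_lrel_sconj' (hband : ∀ x : S, x * x = x) {a c : S} (h : LRel a c) :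
    SConj a c := by
  obtain ⟨⟨u, hu⟩, ⟨v, hv⟩⟩ := h
  rcases withone_cases' u with rfl | ⟨u₀, rfl⟩
  · rw [one_mul] at hu
    obtain rfl : a = c := WithOne.coe_inj.mp hu
    exact Relation.TransGen.single ⟨_, _, (hband _).symm, (hband _).symm⟩
  rcases withone_cases' v with rfl | ⟨v₀, rfl⟩
  · rw [one_mul] at hv
    obtain rfl : c = a := WithOne.coe_inj.mp hv
    exact Relation.TransGen.single ⟨_, _, (hband _).symm, (hband _).symm⟩
  have hu' : u₀ * a = c := by exact_mod_cast hu
  have hv' : v₀ * c = a := by exact_mod_cast hv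
  refine Relation.TransGen.single ⟨a, c, ?_, ?_⟩
  · rw [← hv', mul_assoc, hband]
  · rw [← hu', mul_assoc, hband]

lemma band_rrel_sconj' (hband : ∀ x : S, x * x = x) {c b : S} (h : RRel c b) :
    SConj c b := by
  obtain ⟨⟨s, hs⟩, ⟨t, ht⟩⟩ := h   -- c * s = b, b * t = c
  rcases withone_cases' s with rfl | ⟨s₀, rfl⟩
  · rw [mul_one] at hs
    obtain rfl : c = b := WithOne.coe_inj.mp hs
    exact Relation.TransGen.single ⟨_, _, (hband _).symm, (hband _).symm⟩
  rcases withone_cases' t with rfl | ⟨t₀, rfl⟩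
  · rw [mul_one] at ht
    obtain rfl : b = c := WithOne.coe_inj.mp ht
    exact Relation.TransGen.single ⟨_, _, (hband _).symm, (hband _).symm⟩
  have hs' : c * s₀ = b := by exact_mod_cast hs
  have ht' : b * t₀ = c := by exact_mod_cast ht
  refine Relation.TransGen.single ⟨b, c, ?_, ?_⟩
  · rw [← ht', ← mul_assoc, hband]
  · rw [← hs', ← mul_assoc, hband]

theorem band_sconj_iff_dRel (hband : ∀ x : S, x * x = x) (a b : S) :
    SConj a b ↔ DRel a b := by
  constructor
  · intro h
    induction h with
    | single h => exact pconj_drel' hband h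
    | tail _ h ih => exact drel_trans' ih (pconj_drel' hband h)
  · rintro ⟨c, hL, hR⟩
    exact (band_lrel_sconj' hband hL).trans (band_rrel_sconj' hband hR)
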